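/- arXiv:0906.0947 — 4 statements merged into one kernel-verified Lean document; each statement's English description precedes it below -/
import Mathlib

section
/- Let g be a Lie algebra with a ℤ^n-grading g = ⊕_{α∈ℤ^n} g_α such that g_0 is abelian, [g_α, g_β] = g_{α+β} for all α ≠ β, and the grading is the root space decomposition with respect to g_0. Let V be a simple weight g-module, λ ∈ supp(V), and set Λ̂ = (λ + ℤ^n) ∖ supp(V). Let μ_1,…,μ_k ∈ Λ̂ and a_1,…,a_k be positive real numbers with a_1 + ⋯ + a_k = 1, and suppose μ := a_1 μ_1 + ⋯ + a_k μ_k (a convex combination formed inside the real affine space containing the lattice coset λ + ℤ^n) lies in λ + ℤ^n. Then either μ = 0 (the zero weight) or μ ∈ Λ̂. -/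
/-! Preamble: `ℤⁿ`-graded Lie algebras whose grading is the root space
decomposition with respect to the abelian zero component, together with
weight modules, supports and related notions. -/

/-- The dot product `a · x` of a real vector with an integer vector. -/
def rdot {n : ℕ} (a : Fin n → ℝ) (x : Fin n → ℤ) : ℝ := ∑ i, a i * (x i : ℝ)

/-- A `ℤⁿ`-grading `g = ⊕ g_α` of a Lie algebra `g` over `k` such that `g₀` is
abelian, `[g_α, g_β] = g_{α+β}` for all `α ≠ β`, and the grading is the root
space decomposition of `g` with respect to `g₀` (which identifies `ℤⁿ` with a
subset of `g₀^*` via the injective additive map `wt`). -/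
structure GradedLie (k : Type*) [Field k] (n : ℕ)
    (g : Type*) [LieRing g] [LieAlgebra k g] where
  gr : (Fin n → ℤ) → Submodule k g
  isInternal : DirectSum.IsInternal gr
  bracket_le : ∀ (α β : Fin n → ℤ), ∀ x ∈ gr α, ∀ y ∈ gr β, ⁅x, y⁆ ∈ gr (α + β)
  bracket_eq : ∀ (α β : Fin n → ℤ), α ≠ β →
    Submodule.span k {z : g | ∃ x ∈ gr α, ∃ y ∈ gr β, z = ⁅x, y⁆} = gr (α + β)
  abelian : ∀ x ∈ gr 0, ∀ y ∈ gr 0, ⁅x, y⁆ = (0 : g)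
  wt : (Fin n → ℤ) → Module.Dual k ↥(gr 0)
  wt_injective : Function.Injective wt
  wt_add : ∀ α β : Fin n → ℤ, wt (α + β) = wt α + wt β
  rootSpace : ∀ α : Fin n → ℤ,
    (gr α : Set g) = {x : g | ∀ h : ↥(gr 0), ⁅(h : g), x⁆ = wt α h • x}

namespace GradedLie

variable {k : Type*} [Field k] {n : ℕ} {g : Type*} [LieRing g] [LieAlgebra k g]

variable (P : GradedLie k n g)
variable (V : Type*) [AddCommGroup V] [Module k V] [LieRingModule g V] [LieModule k g V]

/-- The weight space of `V` for the weight `lam ∈ g₀^*`. -/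
def weightSpace (lam : Module.Dual k ↥(P.gr 0)) : Submodule k V where
  carrier := {v : V | ∀ h : ↥(P.gr 0), ⁅(h : g), v⁆ = lam h • v}
  add_mem' := by
    intro u v hu hv h
    rw [lie_add, hu h, hv h, smul_add]
  zero_mem' := by intro h; rw [lie_zero, smul_zero]
  smul_mem' := by
    intro a v hv h
    rw [lie_smul, hv h, smul_comm]

/-- The support of `V`: weights with nonzero weight space. -/
def supp : Set (Module.Dual k ↥(P.gr 0)) := {lam | P.weightSpace V lam ≠ ⊥}

/-- `V` is a weight module: it is the sum of its weight spaces. -/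
def IsWeightModule : Prop :=
  ⨆ lam : Module.Dual k ↥(P.gr 0), P.weightSpace V lam = ⊤

/-- Dense: the support is a full coset `lam + ℤⁿ`. -/
def IsDense : Prop :=
  ∃ lam : Module.Dual k ↥(P.gr 0),
    P.supp V = {mu | ∃ x : Fin n → ℤ, mu = lam + P.wt x}

/-- Punctured: the support is `ℤⁿ ∖ {0}`. -/
def IsPunctured : Prop :=
  P.supp V = {mu | ∃ x : Fin n → ℤ, x ≠ 0 ∧ mu = P.wt x}

/-- Trivial module: one–dimensional with zero action. -/
def IsTrivialMod (_P : GradedLie k n g) : Prop :=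
  Module.rank k V = 1 ∧ ∀ (x : g) (v : V), ⁅x, v⁆ = 0

/-- Cut module: the support is contained in a shifted half space
`lam + b + ℤⁿ_{-0}^{(a)}`. -/
def IsCut : Prop :=
  ∃ lam ∈ P.supp V, ∃ a : Fin n → ℝ, a ≠ 0 ∧ ∃ b : Fin n → ℤ,
    ∀ mu ∈ P.supp V, ∃ x : Fin n → ℤ, rdot a x ≤ 0 ∧ mu = lam + P.wt b + P.wt x

/-- Generalized highest weight element with respect to a `ℤ`-basis `f` of `ℤⁿ`. -/
def IsGHW (f : Fin n → (Fin n → ℤ)) (v : V) : Prop :=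
  ∃ N : ℕ, ∀ m : Fin n → ℤ, (∀ i, (N : ℤ) < m i) →
    ∀ x ∈ P.gr (∑ i, m i • f i), ⁅x, v⁆ = 0

/-- Generalized highest weight element with respect to the standard basis of `ℤⁿ`:
`g_γ v = 0` whenever all `γ_i > N`. -/
def IsGHWstd (v : V) : Prop :=
  ∃ N : ℕ, ∀ γ : Fin n → ℤ, (∀ i, (N : ℤ) < γ i) →
    ∀ x ∈ P.gr γ, ⁅x, v⁆ = 0

/-- Mixed module: some weight space in the coset is infinite dimensional and
some is finite dimensional. -/
def IsMixed : Prop :=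
  ∃ lam ∈ P.supp V, ∃ x : Fin n → ℤ,
    ¬ Module.Finite k ↥(P.weightSpace V lam) ∧
      Module.Finite k ↥(P.weightSpace V (lam + P.wt x))

end GradedLie

private lemma aux_rat_ker {N n : ℕ} (α : Fin N → (Fin n → ℤ)) (a : Fin N → ℝ)
    (hker : ∀ j, ∑ i, a i * (α i j : ℝ) = 0) :
    ∃ (T : Type) (_ : Fintype T) (q : Fin N → T → ℚ) (e : T → ℝ),
      (∀ i, a i = ∑ t, (q i t : ℝ) * e t) ∧
      (∀ (j : Fin n) (t : T), ∑ i, q i t * (α i j : ℚ) = 0) := by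
  have hfin : FiniteDimensional ℚ ↥(Submodule.span ℚ (Set.range a)) :=
    FiniteDimensional.span_of_finite ℚ (Set.finite_range a)
  set W := Submodule.span ℚ (Set.range a) with hW
  let B := Module.finBasis ℚ ↥W
  let av : Fin N → W := fun i => ⟨a i, Submodule.subset_span (Set.mem_range_self i)⟩
  refine ⟨Fin (Module.finrank ℚ ↥W), inferInstance, fun i t => B.repr (av i) t,
    fun t => ((B t : W) : ℝ), ?_, ?_⟩
  · intro i
    calc a i = (W.subtype (av i) : ℝ) := rfl
      _ = W.subtype (∑ t, B.repr (av i) t • B t) := by rw [B.sum_repr]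
      _ = ∑ t, ((B.repr (av i) t : ℚ) : ℝ) * ((B t : W) : ℝ) := by
          rw [map_sum]
          exact Finset.sum_congr rfl fun t _ => by rw [map_smul, Rat.smul_def]; rfl
  · intro j t
    have hBind : LinearIndependent ℚ (fun t => ((B t : W) : ℝ)) :=
      B.linearIndependent.map' W.subtype (Submodule.ker_subtype W)
    have ha : ∀ i, a i = ∑ t, ((B.repr (av i) t : ℚ) : ℝ) * ((B t : W) : ℝ) := by
      intro i
      calc a i = (W.subtype (av i) : ℝ) := rfl
        _ = W.subtype (∑ t, B.repr (av i) t • B t) := by rw [B.sum_repr]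
        _ = ∑ t, ((B.repr (av i) t : ℚ) : ℝ) * ((B t : W) : ℝ) := by
            rw [map_sum]
            exact Finset.sum_congr rfl fun t _ => by rw [map_smul, Rat.smul_def]; rfl
    have h0 : ∑ t, ((∑ i, B.repr (av i) t * (α i j : ℚ)) : ℚ) • ((B t : W) : ℝ) = 0 := by
      calc ∑ t, ((∑ i, B.repr (av i) t * (α i j : ℚ)) : ℚ) • ((B t : W) : ℝ)
          = ∑ t, ∑ i, ((B.repr (av i) t : ℚ) : ℝ) * (α i j : ℝ) * ((B t : W) : ℝ) := by
            refine Finset.sum_congr rfl fun t _ => ?_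
            rw [Rat.smul_def]
            push_cast
            rw [Finset.sum_mul]
        _ = ∑ i, ∑ t, ((B.repr (av i) t : ℚ) : ℝ) * (α i j : ℝ) * ((B t : W) : ℝ) :=
            Finset.sum_comm
        _ = ∑ i, a i * (α i j : ℝ) := by
            refine Finset.sum_congr rfl fun i _ => ?_
            rw [ha i, Finset.sum_mul]
            exact Finset.sum_congr rfl fun t _ => by ring
        _ = 0 := hker j
    exact linearIndependent_iff'.mp hBind Finset.univ _ h0 t (Finset.mem_univ t)

private lemma aux_pos_nat_comb {N n : ℕ} (hN : 0 < N) (α : Fin N → (Fin n → ℤ))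
    (a : Fin N → ℝ) (hpos : ∀ i, 0 < a i)
    (hker : ∀ j, ∑ i, a i * (α i j : ℝ) = 0) :
    ∃ c : Fin N → ℕ, (∀ i, 0 < c i) ∧ ∀ j, ∑ i, (c i : ℤ) * α i j = 0 := by
  obtain ⟨T, _, q, e, hae, hq0⟩ := aux_rat_ker α a hker
  -- choose rationals r t close to e t
  have hNe : (Finset.univ : Finset (Fin N)).Nonempty := ⟨⟨0, hN⟩, Finset.mem_univ _⟩
  set amin := Finset.univ.inf' hNe a with hamin
  have hamin_pos : 0 < amin := (Finset.lt_inf'_iff hNe).mpr fun i _ => hpos i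
  set M : ℝ := (∑ i, ∑ t, |(q i t : ℝ)|) + 1 with hM
  have hMpos : 0 < M := by positivity
  set ε : ℝ := amin / M with hε
  have hεpos : 0 < ε := by positivity
  have hr : ∀ t : T, ∃ r : ℚ, |e t - (r : ℝ)| < ε := fun t => exists_rat_near (e t) hεpos
  choose r hrnear using hr
  set b : Fin N → ℚ := fun i => ∑ t, r t * q i t with hb
  -- b is positive
  have hbpos : ∀ i, 0 < b i := by
    intro i
    have hdiff : |a i - (b i : ℝ)| < amin := by
      have h1 : a i - (b i : ℝ) = ∑ t, (q i t : ℝ) * (e t - (r t : ℝ)) := by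
        rw [hae i, hb]
        push_cast
        rw [← Finset.sum_sub_distrib]
        exact Finset.sum_congr rfl fun t _ => by ring
      rw [h1]
      calc |∑ t, (q i t : ℝ) * (e t - (r t : ℝ))|
          ≤ ∑ t, |(q i t : ℝ) * (e t - (r t : ℝ))| := Finset.abs_sum_le_sum_abs _ _
        _ ≤ ∑ t, |(q i t : ℝ)| * ε := by
            refine Finset.sum_le_sum fun t _ => ?_
            rw [abs_mul]
            exact mul_le_mul_of_nonneg_left (le_of_lt (hrnear t)) (abs_nonneg _)
        _ = (∑ t, |(q i t : ℝ)|) * ε := by rw [Finset.sum_mul]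
        _ < M * ε := by
            refine mul_lt_mul_of_pos_right ?_ hεpos
            rw [hM]
            have h2 : ∑ t, |(q i t : ℝ)| ≤ ∑ i, ∑ t, |(q i t : ℝ)| :=
              Finset.single_le_sum (f := fun i => ∑ t, |(q i t : ℝ)|)
                (fun i _ => Finset.sum_nonneg fun t _ => abs_nonneg _) (Finset.mem_univ i)
            linarith
        _ = amin := by rw [hε]; field_simp
    have h3 : amin ≤ a i := Finset.inf'_le a (Finset.mem_univ i)
    have h4 := abs_lt.mp hdiff
    have : (0 : ℝ) < (b i : ℝ) := by linarith
    exact_mod_cast this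
  -- b is in the kernel
  have hbker : ∀ j, ∑ i, b i * (α i j : ℚ) = 0 := by
    intro j
    rw [hb]
    calc ∑ i, (∑ t, r t * q i t) * (α i j : ℚ)
        = ∑ i, ∑ t, r t * (q i t * (α i j : ℚ)) := by
          refine Finset.sum_congr rfl fun i _ => ?_
          rw [Finset.sum_mul]
          exact Finset.sum_congr rfl fun t _ => by ring
      _ = ∑ t, r t * (∑ i, q i t * (α i j : ℚ)) := by
          rw [Finset.sum_comm]
          exact Finset.sum_congr rfl fun t _ => by rw [Finset.mul_sum]
      _ = 0 := by simp [hq0 j]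
  -- integerize
  set d : ℕ := ∏ i, (b i).den with hd
  have hdpos : 0 < d := Finset.prod_pos fun i _ => (b i).pos
  have hdvd : ∀ i, (b i).den ∣ d := fun i => Finset.dvd_prod_of_mem _ (Finset.mem_univ i)
  set c' : Fin N → ℤ := fun i => (b i).num * ((d / (b i).den : ℕ) : ℤ) with hc'
  have hcast : ∀ i, (c' i : ℚ) = (d : ℚ) * b i := by
    intro i
    have h1 : ((d / (b i).den : ℕ) : ℚ) * ((b i).den : ℚ) = (d : ℚ) := by
      rw [← Nat.cast_mul, Nat.div_mul_cancel (hdvd i)]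
    have h2 : b i * ((b i).den : ℚ) = ((b i).num : ℚ) := by
      nth_rewrite 1 [← Rat.num_div_den (b i)]
      exact div_mul_cancel₀ _ (by exact_mod_cast (b i).den_nz)
    have h3 : (c' i : ℚ) = ((b i).num : ℚ) * ((d / (b i).den : ℕ) : ℚ) := by
      rw [hc', Int.cast_mul, Int.cast_natCast]
    rw [h3, ← h2]
    calc (b i * ((b i).den : ℚ)) * ((d / (b i).den : ℕ) : ℚ)
        = b i * (((d / (b i).den : ℕ) : ℚ) * ((b i).den : ℚ)) := by ring
      _ = (d : ℚ) * b i := by rw [h1]; ring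
  have hc'pos : ∀ i, 0 < c' i := by
    intro i
    have := hcast i
    have hd' : (0:ℚ) < (d:ℚ) * b i := mul_pos (by exact_mod_cast hdpos) (hbpos i)
    rw [← this] at hd'
    exact_mod_cast hd'
  clear_value c'
  refine ⟨fun i => (c' i).toNat, fun i => by show 0 < (c' i).toNat; have := hc'pos i; omega, ?_⟩
  intro j
  have hcc : ∀ i, (((c' i).toNat : ℤ) : ℚ) = (d : ℚ) * b i := by
    intro i
    rw [Int.toNat_of_nonneg (le_of_lt (hc'pos i))]
    exact hcast i
  have : ∑ i, (((c' i).toNat : ℤ) : ℚ) * ((α i j : ℤ) : ℚ) = 0 := by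
    calc ∑ i, (((c' i).toNat : ℤ) : ℚ) * ((α i j : ℤ) : ℚ)
        = ∑ i, (d : ℚ) * (b i * (α i j : ℚ)) := by
          refine Finset.sum_congr rfl fun i _ => ?_
          rw [hcc i]; ring
      _ = (d : ℚ) * ∑ i, b i * (α i j : ℚ) := by rw [Finset.mul_sum]
      _ = 0 := by rw [hbker j, mul_zero]
  exact_mod_cast this

private lemma aux_comb_step {n : ℕ} (A : Set (Fin n → ℤ))
    (hA : ∀ p ∈ A, ∀ q ∈ A, p ≠ q → p + q ∈ A) :
    ∀ (r : ℕ) (p : Fin n → ℤ) (rem : Multiset (Fin n → ℤ)),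
      Multiset.card rem = r → p ∈ A →
      (∀ z ∈ rem, z ∈ A ∧ z ≠ 0) → p + rem.sum = 0 → (0 : Fin n → ℤ) ∈ A := by
  intro r
  induction r with
  | zero =>
    intro p rem hcard hp _ hsum
    rw [Multiset.card_eq_zero.mp hcard, Multiset.sum_zero, add_zero] at hsum
    rwa [hsum] at hp
  | succ r ih =>
    intro p rem hcard hp hz hsum
    by_cases hex : ∃ z ∈ rem, z ≠ p
    · obtain ⟨z, hzrem, hzp⟩ := hex
      refine ih (p + z) (rem.erase z) ?_ (hA p hp z (hz z hzrem).1 (Ne.symm hzp)) ?_ ?_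
      · rw [Multiset.card_erase_of_mem hzrem, hcard]; rfl
      · exact fun w hw => hz w (Multiset.mem_of_mem_erase hw)
      · rw [← Multiset.cons_erase hzrem, Multiset.sum_cons] at hsum
        rw [add_assoc]; exact hsum
    · push_neg at hex
      have hne : rem ≠ 0 := by
        intro h0; rw [h0] at hcard; simp at hcard
      obtain ⟨z, hzrem⟩ := Multiset.exists_mem_of_ne_zero hne
      have hrep : rem = Multiset.replicate (r + 1) p := Multiset.eq_replicate.mpr ⟨hcard, hex⟩
      rw [hrep, Multiset.sum_replicate] at hsum
      have hp0 : p = 0 := by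
        funext j
        have hj := congrFun hsum j
        simp only [Pi.add_apply, Pi.smul_apply, Pi.zero_apply, nsmul_eq_mul, Pi.mul_apply,
          Pi.natCast_apply, Pi.one_apply, Nat.cast_add, Nat.cast_one] at hj
        have h2 : (((r : ℤ) + 2)) * p j = 0 := by push_cast at hj; linarith
        rcases mul_eq_zero.mp h2 with h | h
        · exfalso; omega
        · exact h
      exact absurd (hex z hzrem ▸ hp0) (hz z hzrem).2
  
private lemma aux_comb {n : ℕ} (A : Set (Fin n → ℤ))
    (hA : ∀ p ∈ A, ∀ q ∈ A, p ≠ q → p + q ∈ A)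
    (s : Multiset (Fin n → ℤ)) (hs : s ≠ 0)
    (hmem : ∀ z ∈ s, z ∈ A ∧ z ≠ 0) (hsum : s.sum = 0) : (0 : Fin n → ℤ) ∈ A := by
  obtain ⟨z, hz⟩ := Multiset.exists_mem_of_ne_zero hs
  refine aux_comb_step A hA _ z (s.erase z) rfl (hmem z hz).1
    (fun w hw => hmem w (Multiset.mem_of_mem_erase hw)) ?_
  rw [← Multiset.cons_erase hz, Multiset.sum_cons] at hsum
  exact hsum

/-- Convexity of the complement of the support: if `μ` is a
convex combination (inside `ℝⁿ`) of lattice points whose shifts by `λ` avoid the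
support of a simple weight module `V`, and `μ` is a lattice point, then either
`λ + μ` is the zero weight or `λ + μ` avoids the support as well. -/
theorem graded_support_complement_convex
    (k : Type*) [Field k] [IsAlgClosed k] [CharZero k] (n : ℕ) (hn : 0 < n)
    (g : Type*) [LieRing g] [LieAlgebra k g] (P : GradedLie k n g)
    (V : Type*) [AddCommGroup V] [Module k V] [LieRingModule g V] [LieModule k g V]
    (hsimple : IsSimpleOrder (LieSubmodule k g V))
    (hwt : P.IsWeightModule V)
    (lam : Module.Dual k ↥(P.gr 0)) (hlam : lam ∈ P.supp V)
    (N : ℕ) (hN : 0 < N) (x : Fin N → (Fin n → ℤ)) (a : Fin N → ℝ)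
    (hx : ∀ i, lam + P.wt (x i) ∉ P.supp V)
    (hpos : ∀ i, 0 < a i) (hsum : ∑ i, a i = 1)
    (y : Fin n → ℤ) (hy : ∀ j : Fin n, (y j : ℝ) = ∑ i, a i * (x i j : ℝ)) :
    lam + P.wt y = 0 ∨ lam + P.wt y ∉ P.supp V := by
  by_cases hsupp : lam + P.wt y ∈ P.supp V
  swap
  · exact Or.inr hsupp
  left
  obtain ⟨v, hv, hv0⟩ := (Submodule.ne_bot_iff _).mp hsupp
  have hvmem : ∀ h : ↥(P.gr 0), ⁅(h : g), v⁆ = (lam + P.wt y) h • v := hv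
  set A : Set (Fin n → ℤ) := {β | ∀ u ∈ P.gr β, ⁅u, v⁆ = (0 : V)} with hAdef
  have hA : ∀ p ∈ A, ∀ q ∈ A, p ≠ q → p + q ∈ A := by
    intro β hβ γ hγ hne u hu
    rw [← P.bracket_eq β γ hne] at hu
    induction hu using Submodule.span_induction with
    | mem z hzmem =>
      obtain ⟨xx, hxx, yy, hyy, rfl⟩ := hzmem
      rw [lie_lie, hβ xx hxx, hγ yy hyy, lie_zero, lie_zero, sub_zero]
    | zero => exact zero_lie v
    | add x1 x2 h1 h2 ih1 ih2 => rw [add_lie, ih1, ih2, add_zero]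
    | smul cc x1 h1 ih => rw [smul_lie, ih, smul_zero]
  have hshift : ∀ (β : Fin n → ℤ) (u : g), u ∈ P.gr β →
      ⁅u, v⁆ ∈ P.weightSpace V (lam + P.wt y + P.wt β) := by
    intro β u hu
    show ∀ h : ↥(P.gr 0), ⁅(h : g), ⁅u, v⁆⁆ = (lam + P.wt y + P.wt β) h • ⁅u, v⁆
    intro h
    have hroot : ⁅(h : g), u⁆ = P.wt β h • u := by
      have h1 : u ∈ (P.gr β : Set g) := hu
      rw [P.rootSpace β] at h1
      exact h1 h
    rw [leibniz_lie, hroot, hvmem h, smul_lie, lie_smul]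
    rw [show (lam + P.wt y + P.wt β) h = lam h + P.wt y h + P.wt β h from rfl]
    rw [add_smul, add_smul]
    rw [show (lam + P.wt y) h = lam h + P.wt y h from rfl, add_smul]
    abel
  have hxA : ∀ i, (x i - y) ∈ A := by
    intro i u hu
    have h1 := hshift (x i - y) u hu
    have h2 : lam + P.wt y + P.wt (x i - y) = lam + P.wt (x i) := by
      rw [add_assoc, ← P.wt_add]
      congr 2
      abel
    rw [h2] at h1
    have h3 : P.weightSpace V (lam + P.wt (x i)) = ⊥ := by
      by_contra hne
      exact hx i hne
    rw [h3] at h1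
    exact (Submodule.mem_bot k).mp h1
  have hx0 : ∀ i, x i - y ≠ 0 := by
    intro i h0
    have hxy : x i = y := by rwa [sub_eq_zero] at h0
    exact hx i (by rw [hxy]; exact hsupp)
  have hker : ∀ j, ∑ i, a i * (((x i - y) j : ℤ) : ℝ) = 0 := by
    intro j
    have h1 : ∑ i, a i * ((x i j : ℤ) : ℝ) = (y j : ℝ) := (hy j).symm
    have h2 : ∑ i, a i * ((y j : ℤ) : ℝ) = (y j : ℝ) := by
      rw [← Finset.sum_mul, hsum, one_mul]
    calc ∑ i, a i * (((x i - y) j : ℤ) : ℝ)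
        = ∑ i, (a i * ((x i j : ℤ) : ℝ) - a i * ((y j : ℤ) : ℝ)) := by
          refine Finset.sum_congr rfl fun i _ => ?_
          rw [Pi.sub_apply]
          push_cast
          ring
      _ = 0 := by rw [Finset.sum_sub_distrib, h1, h2, sub_self]
  obtain ⟨c, hcpos, hc⟩ := aux_pos_nat_comb hN (fun i => x i - y) a hpos hker
  set s : Multiset (Fin n → ℤ) := ∑ i, Multiset.replicate (c i) (x i - y) with hs
  have hs0 : s ≠ 0 := by
    intro h0
    have hmem0 : (x ⟨0, hN⟩ - y) ∈ s :=
      Multiset.mem_sum.mpr ⟨⟨0, hN⟩, Finset.mem_univ _,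
        Multiset.mem_replicate.mpr ⟨(hcpos _).ne', rfl⟩⟩
    rw [h0] at hmem0
    exact absurd hmem0 (Multiset.notMem_zero _)
  have hsmem : ∀ z ∈ s, z ∈ A ∧ z ≠ 0 := by
    intro z hzs
    obtain ⟨i, -, hzi⟩ := Multiset.mem_sum.mp hzs
    obtain ⟨-, rfl⟩ := Multiset.mem_replicate.mp hzi
    exact ⟨hxA i, hx0 i⟩
  have hssum : s.sum = 0 := by
    have h1 : s.sum = ∑ i, (c i) • (x i - y) := by
      calc s.sum = Multiset.sumAddMonoidHom s := rfl
        _ = ∑ i, Multiset.sumAddMonoidHom (Multiset.replicate (c i) (x i - y)) :=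
            map_sum _ _ _
        _ = ∑ i, (c i) • (x i - y) := by
            refine Finset.sum_congr rfl fun i _ => ?_
            exact Multiset.sum_replicate _ _
    rw [h1]
    funext j
    rw [Finset.sum_apply]
    have h2 := hc j
    simp only [Pi.zero_apply]
    calc ∑ i, ((c i) • (x i - y)) j = ∑ i, ((c i : ℤ)) * ((x i - y) j) := by
          refine Finset.sum_congr rfl fun i _ => ?_
          rw [Pi.smul_apply, nsmul_eq_mul]
      _ = 0 := h2
  have h0A : (0 : Fin n → ℤ) ∈ A := aux_comb A hA s hs0 hsmem hssum
  have hmu0 : ∀ h : ↥(P.gr 0), (lam + P.wt y) h = 0 := by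
    intro h
    have h1 : ⁅(h : g), v⁆ = 0 := h0A (h : g) h.2
    rw [hvmem h] at h1
    rcases smul_eq_zero.mp h1 with h2 | h2
    · exact h2
    · exact absurd h2 hv0
  exact LinearMap.ext hmu0
end

section
/- Let n be a positive integer, a ∈ ℝ^n, and β ∈ ℤ^n with a·β < 0. Then there exist elements β_1^+, β_1^−, …, β_n^+, β_n^− ∈ ℤ^n with a·β_i^± > 0 for all i, such that the set {β, β_1^+, β_1^−, …, β_n^+, β_n^−} generates ℤ^n as an additive semigroup; that is, every element of ℤ^n is a sum of elements of this set with nonnegative integer multiplicities (with at least one summand, or equivalently every element of ℤ^n is an ℕ-linear combination of these 2n+1 elements). -/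
/-- If `a ∈ ℝⁿ` and `β ∈ ℤⁿ` satisfy `a·β < 0`, then there are
`β₁^±, …, β_n^± ∈ ℤⁿ` with `a·β_i^± > 0` such that `{β, β₁^±, …, β_n^±}`
generates `ℤⁿ` as a semigroup: every `x ∈ ℤⁿ` is an `ℕ`-linear combination of
these `2n+1` elements. -/
theorem lattice_semigroup_generators (n : ℕ) (hn : 0 < n)
    (a : Fin n → ℝ) (β : Fin n → ℤ) (hβ : rdot a β < 0) :
    ∃ βp βm : Fin n → (Fin n → ℤ),
      (∀ i, 0 < rdot a (βp i)) ∧ (∀ i, 0 < rdot a (βm i)) ∧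
      ∀ x : Fin n → ℤ, ∃ (b : ℕ) (bp bm : Fin n → ℕ),
        x = (b : ℤ) • β + ∑ i, ((bp i : ℤ) • βp i + (bm i : ℤ) • βm i) := by
  have hc0 : (0:ℝ) < -rdot a β := by linarith
  haveI : Nonempty (Fin n) := Fin.pos_iff_nonempty.mp hn
  obtain ⟨M, hM⟩ := exists_nat_gt
    ((Finset.univ.sup' Finset.univ_nonempty fun i => |a i|) / (-rdot a β))
  have hM' : ∀ i, |a i| < (M : ℝ) * (-rdot a β) := by
    intro i
    have h1 : |a i| ≤ Finset.univ.sup' Finset.univ_nonempty fun i => |a i| :=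
      Finset.le_sup' (fun i => |a i|) (Finset.mem_univ i)
    have h2 := (div_lt_iff₀ hc0).mp hM
    linarith
  have key : ∀ (t : ℤ) (i : Fin n),
      rdot a (fun j => (if j = i then t else 0) - M * β j)
        = (t : ℝ) * a i - M * rdot a β := by
    intro t i
    simp only [rdot, Int.cast_sub, Int.cast_mul, Int.cast_natCast, mul_sub,
      Finset.sum_sub_distrib]
    rw [Finset.mul_sum]
    congr 1
    · rw [Finset.sum_eq_single i]
      · simp [mul_comm]
      · intro b _ hb; simp [hb]
      · simp
    · apply Finset.sum_congr rfl; intro j _; push_cast; ring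
  refine ⟨fun i j => (if j = i then 1 else 0) - M * β j,
         fun i j => (if j = i then -1 else 0) - M * β j, ?_, ?_, ?_⟩
  · intro i
    rw [key 1 i]
    push_cast
    nlinarith [hM' i, neg_abs_le (a i), le_abs_self (a i)]
  · intro i
    rw [key (-1) i]
    push_cast; nlinarith [hM' i, abs_nonneg (a i), le_abs_self (a i)]
  · intro x
    refine ⟨M * ∑ i, (x i).natAbs, fun i => (x i).toNat, fun i => (-x i).toNat, ?_⟩
    funext j
    simp only [Pi.add_apply, Pi.smul_apply, Finset.sum_apply, smul_eq_mul]
    have expand : ∀ i : Fin n,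
        ((x i).toNat : ℤ) * ((if j = i then 1 else 0) - M * β j)
          + ((-x i).toNat : ℤ) * ((if j = i then -1 else 0) - M * β j)
        = x i * (if j = i then 1 else 0) - ((x i).natAbs : ℤ) * (M * β j) := by
      intro i
      have h1 : ((x i).toNat : ℤ) - ((-x i).toNat : ℤ) = x i := by
        omega
      have h2 : ((x i).toNat : ℤ) + ((-x i).toNat : ℤ) = (x i).natAbs := by
        omega
      have hite : (if j = i then (-1 : ℤ) else 0) = -(if j = i then 1 else 0) := by
        split <;> ring
      rw [hite]
      linear_combination (if j = i then (1:ℤ) else 0) * h1 - ((M:ℤ) * β j) * h2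
    rw [Finset.sum_congr rfl (fun i _ => expand i)]
    rw [Finset.sum_sub_distrib]
    have hs1 : ∑ i, x i * (if j = i then 1 else 0) = x j := by
      rw [Finset.sum_eq_single j (fun b _ hb => by rw [if_neg (Ne.symm hb), mul_zero])
        (by simp), if_pos rfl, mul_one]
    have hs2 : ∑ i : Fin n, ((x i).natAbs : ℤ) * ((M : ℤ) * β j)
        = (∑ i, ((x i).natAbs : ℤ)) * ((M : ℤ) * β j) := (Finset.sum_mul ..).symm
    rw [hs1, hs2]
    push_cast
    ring
end

section
/- Let g be a Lie algebra with a ℤ^n-grading g = ⊕_{α∈ℤ^n} g_α such that g_0 is abelian, [g_α, g_β] = g_{α+β} for all α ≠ β, and the grading is the root space decomposition with respect to g_0. Let V be a simple weight g-module, λ ∈ supp(V), and set Λ̂ = (λ + ℤ^n) ∖ supp(V). Assume Λ̂ is nonempty and that there is a nonzero a ∈ ℝ^n with Λ̂ ⊆ λ + ℤ_{+}^{(a)} (equivalently, λ + x ∈ supp(V) for all x ∈ ℤ^n with a·x ≤ 0). Then for every β ∈ ℤ^n with a·β < 0 there exists μ ∈ supp(V) such that μ − β ∈ Λ̂. -/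
/-- Let `V` be a simple weight module whose support misses
some point of the coset `λ + ℤⁿ`, while containing all `λ + x` with `a·x ≤ 0`
for a fixed nonzero `a ∈ ℝⁿ`.  Then for every `β` with `a·β < 0` there is
`μ ∈ supp V` with `μ − β ∉ supp V`. -/
theorem graded_exists_boundary_weight
    (k : Type*) [Field k] [IsAlgClosed k] [CharZero k] (n : ℕ) (hn : 0 < n)
    (g : Type*) [LieRing g] [LieAlgebra k g] (P : GradedLie k n g)
    (V : Type*) [AddCommGroup V] [Module k V] [LieRingModule g V] [LieModule k g V]
    (hsimple : IsSimpleOrder (LieSubmodule k g V))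
    (hwt : P.IsWeightModule V)
    (lam : Module.Dual k ↥(P.gr 0)) (hlam : lam ∈ P.supp V)
    (a : Fin n → ℝ) (ha : a ≠ 0)
    (hne : ∃ y : Fin n → ℤ, lam + P.wt y ∉ P.supp V)
    (hhalf : ∀ y : Fin n → ℤ, rdot a y ≤ 0 → lam + P.wt y ∈ P.supp V) :
    ∀ β : Fin n → ℤ, rdot a β < 0 →
      ∃ y : Fin n → ℤ, lam + P.wt y ∈ P.supp V ∧
        lam + P.wt (y - β) ∉ P.supp V := by
  classical
  intro β hβ
  obtain ⟨z, hz⟩ := hne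
  have hlin : ∀ m : ℕ, rdot a (z + (m : ℤ) • β) = rdot a z + m * rdot a β := by
    intro m
    simp only [rdot, Pi.add_apply, Pi.smul_apply, smul_eq_mul, Int.cast_add,
      Int.cast_mul, Int.cast_natCast, mul_add, Finset.sum_add_distrib, Finset.mul_sum]
    congr 1
    exact Finset.sum_congr rfl fun i _ => by ring
  -- there is some m with the shifted point in the half space, hence in the support
  have hex : ∃ m : ℕ, lam + P.wt (z + (m : ℤ) • β) ∈ P.supp V := by
    obtain ⟨m, hm⟩ := exists_nat_ge (rdot a z / (-rdot a β))
    refine ⟨m, hhalf _ ?_⟩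
    rw [hlin]
    have hb : 0 < -rdot a β := by linarith
    rw [div_le_iff₀ hb] at hm
    nlinarith
  set m := Nat.find hex with hmdef
  have hmem : lam + P.wt (z + (m : ℤ) • β) ∈ P.supp V := Nat.find_spec hex
  have hm0 : m ≠ 0 := by
    intro h
    rw [h] at hmem
    simp only [Nat.cast_zero, zero_smul, add_zero] at hmem
    exact hz hmem
  refine ⟨z + (m : ℤ) • β, hmem, ?_⟩
  have hstep : z + (m : ℤ) • β - β = z + ((m - 1 : ℕ) : ℤ) • β := by
    have : (m : ℤ) = ((m - 1 : ℕ) : ℤ) + 1 := by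
      have := Nat.succ_pred_eq_of_pos (Nat.pos_of_ne_zero hm0)
      omega
    rw [this, add_smul, one_smul]
    abel
  rw [hstep]
  exact Nat.find_min hex (Nat.pred_lt hm0)
end

section
/- Let g be a Lie algebra with a ℤ^n-grading g = ⊕_{α∈ℤ^n} g_α such that g_0 is abelian, [g_α, g_β] = g_{α+β} for all α ≠ β, and the grading is the root space decomposition with respect to g_0. Let V be a simple weight g-module in which every element is a generalized highest weight element with respect to the standard basis e_1,…,e_n of ℤ^n. Let v ∈ V be a nonzero weight vector, a ∈ ℝ^n, and β ∈ ℤ^n with a·β < 0 and g_β v = 0. Then for every w ∈ V there exists N ∈ ℕ such that g_{bβ+γ} w = 0 for every nonnegative integer b and every γ ∈ ℤ^n with γ_i > N for all i. -/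
set_option linter.unusedSectionVars false

namespace GradedLie

variable {k : Type*} [Field k] {n : ℕ} {g : Type*} [LieRing g] [LieAlgebra k g]
variable (P : GradedLie k n g)
variable {V : Type*} [AddCommGroup V] [Module k V] [LieRingModule g V] [LieModule k g V]

lemma mem_weightSpace_iff {lam : Module.Dual k ↥(P.gr 0)} {w : V} :
    w ∈ P.weightSpace V lam ↔ ∀ h : ↥(P.gr 0), ⁅(h : g), w⁆ = lam h • w := Iff.rfl

lemma wt_zero : P.wt 0 = 0 := by
  have h := P.wt_add 0 0
  rw [add_zero] at h
  exact (left_eq_add.mp h)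

private lemma lie_finset_sum {ι : Type*} (x : g) (s : Finset ι) (f : ι → V) :
    ⁅x, ∑ i ∈ s, f i⁆ = ∑ i ∈ s, ⁅x, f i⁆ := by
  classical
  induction s using Finset.induction with
  | empty => simp
  | insert a s h ih => rw [Finset.sum_insert h, Finset.sum_insert h, lie_add, ih]

/-- If `g_s v = 0` and `g_t v = 0` with `s ≠ t`, then `g_{s+t} v = 0`. -/
lemma ann_add {v : V} {s t : Fin n → ℤ} (hst : s ≠ t)
    (hs : ∀ x ∈ P.gr s, ⁅x, v⁆ = 0) (ht : ∀ x ∈ P.gr t, ⁅x, v⁆ = 0) :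
    ∀ x ∈ P.gr (s + t), ⁅x, v⁆ = 0 := by
  intro z hz
  rw [← P.bracket_eq s t hst] at hz
  induction hz using Submodule.span_induction with
  | mem z hz =>
    obtain ⟨x, hx, y, hy, rfl⟩ := hz
    rw [lie_lie, hs x hx, ht y hy, lie_zero, lie_zero, sub_zero]
  | zero => simp
  | add x y hx hy ihx ihy => rw [add_lie, ihx, ihy, add_zero]
  | smul t x hx ih => rw [smul_lie, ih, smul_zero]

/-- Span of brackets of `g_c` with a subspace. -/
def bspan (c : Fin n → ℤ) (W : Submodule k V) : Submodule k V :=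
  Submodule.span k {z : V | ∃ x ∈ P.gr c, ∃ w ∈ W, z = ⁅x, w⁆}

lemma lie_mem_bspan {c : Fin n → ℤ} {W : Submodule k V} {x : g} (hx : x ∈ P.gr c)
    {w : V} (hw : w ∈ W) : ⁅x, w⁆ ∈ P.bspan c W :=
  Submodule.subset_span ⟨x, hx, w, hw, rfl⟩

lemma bspan_mono {c : Fin n → ℤ} {W W' : Submodule k V} (h : W ≤ W') :
    P.bspan c W ≤ P.bspan c W' := by
  apply Submodule.span_mono
  rintro z ⟨x, hx, w, hw, rfl⟩
  exact ⟨x, hx, w, h hw, rfl⟩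

lemma bspan_bot (c : Fin n → ℤ) : P.bspan c (⊥ : Submodule k V) = ⊥ := by
  rw [eq_bot_iff]
  apply Submodule.span_le.2
  rintro z ⟨x, hx, w, hw, rfl⟩
  rw [Submodule.mem_bot] at hw
  simp [hw]

lemma bspan_sup_le {c : Fin n → ℤ} {W W' : Submodule k V} :
    P.bspan c (W ⊔ W') ≤ P.bspan c W ⊔ P.bspan c W' := by
  apply Submodule.span_le.2
  rintro z ⟨x, hx, w, hw, rfl⟩
  obtain ⟨w₁, h₁, w₂, h₂, rfl⟩ := Submodule.mem_sup.1 hw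
  rw [lie_add]
  exact Submodule.add_mem_sup (P.lie_mem_bspan hx h₁) (P.lie_mem_bspan hx h₂)

lemma lie_mem_of_mem_bspan {a b : Fin n → ℤ} {W : Submodule k V} {s : V}
    (hs : s ∈ P.bspan b W) {x : g} (hx : x ∈ P.gr a) :
    ⁅x, s⁆ ∈ P.bspan b (P.bspan a W) ⊔ P.bspan (a + b) W := by
  induction hs using Submodule.span_induction with
  | mem z hz =>
    obtain ⟨y, hy, w, hw, rfl⟩ := hz
    rw [leibniz_lie]
    exact Submodule.add_mem _
      (Submodule.mem_sup_right (P.lie_mem_bspan (P.bracket_le a b x hx y hy) hw))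
      (Submodule.mem_sup_left (P.lie_mem_bspan hy (P.lie_mem_bspan hx hw)))
  | zero => simp
  | add u w hu hw ihu ihw => rw [lie_add]; exact Submodule.add_mem _ ihu ihw
  | smul t u hu ih => rw [lie_smul]; exact Submodule.smul_mem _ _ ih

lemma bspan_swap {a b : Fin n → ℤ} {W : Submodule k V} :
    P.bspan a (P.bspan b W) ≤ P.bspan b (P.bspan a W) ⊔ P.bspan (a + b) W := by
  apply Submodule.span_le.2
  rintro z ⟨x, hx, s, hs, rfl⟩
  exact P.lie_mem_of_mem_bspan hs hx

/-- Iterated bracket spans along a list of degrees (head = outermost). -/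
def chainsS (W : Submodule k V) : List (Fin n → ℤ) → Submodule k V
  | [] => W
  | c :: l => P.bspan c (chainsS W l)

lemma chainsS_append (W : Submodule k V) (l₀ l₁ : List (Fin n → ℤ)) :
    P.chainsS W (l₀ ++ l₁) = P.chainsS (P.chainsS W l₁) l₀ := by
  induction l₀ with
  | nil => rfl
  | cons c l ih => show P.bspan c (P.chainsS W (l ++ l₁)) = _; rw [ih]; rfl

lemma chainsS_mono {W W' : Submodule k V} (h : W ≤ W') (l : List (Fin n → ℤ)) :
    P.chainsS W l ≤ P.chainsS W' l := by
  induction l with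
  | nil => exact h
  | cons c l ih => exact P.bspan_mono ih

lemma chainsS_bot (l : List (Fin n → ℤ)) : P.chainsS (⊥ : Submodule k V) l = ⊥ := by
  induction l with
  | nil => rfl
  | cons c l ih => rw [chainsS, ih, bspan_bot]

lemma chainsS_sup_le (W W' : Submodule k V) (l : List (Fin n → ℤ)) :
    P.chainsS (W ⊔ W') l ≤ P.chainsS W l ⊔ P.chainsS W' l := by
  induction l with
  | nil => exact le_rfl
  | cons c l ih =>
    calc P.chainsS (W ⊔ W') (c :: l) = P.bspan c (P.chainsS (W ⊔ W') l) := rfl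
    _ ≤ P.bspan c (P.chainsS W l ⊔ P.chainsS W' l) := P.bspan_mono ih
    _ ≤ _ := P.bspan_sup_le

lemma lie_mem_weightSpace {c : Fin n → ℤ} {x : g} (hx : x ∈ P.gr c)
    {μ : Module.Dual k ↥(P.gr 0)} {w : V} (hw : w ∈ P.weightSpace V μ) :
    ⁅x, w⁆ ∈ P.weightSpace V (μ + P.wt c) := by
  intro h
  have hxr : ⁅(h : g), x⁆ = P.wt c h • x := by
    have hscl := P.rootSpace c
    have hxm : x ∈ (P.gr c : Set g) := hx
    rw [hscl] at hxm
    exact hxm h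
  calc ⁅(h : g), ⁅x, w⁆⁆ = ⁅⁅(h : g), x⁆, w⁆ + ⁅x, ⁅(h : g), w⁆⁆ := leibniz_lie _ _ _
  _ = (P.wt c h) • ⁅x, w⁆ + (μ h) • ⁅x, w⁆ := by rw [hxr, hw h, smul_lie, lie_smul]
  _ = (μ + P.wt c) h • ⁅x, w⁆ := by rw [LinearMap.add_apply, add_smul]; abel

lemma bspan_weight {c : Fin n → ℤ} {μ : Module.Dual k ↥(P.gr 0)} {W : Submodule k V}
    (h : W ≤ P.weightSpace V μ) : P.bspan c W ≤ P.weightSpace V (μ + P.wt c) := by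
  apply Submodule.span_le.2
  rintro z ⟨x, hx, w, hw, rfl⟩
  exact P.lie_mem_weightSpace hx (h hw)

lemma chainsS_weight {μ : Module.Dual k ↥(P.gr 0)} {W : Submodule k V}
    (h : W ≤ P.weightSpace V μ) (l : List (Fin n → ℤ)) :
    P.chainsS W l ≤ P.weightSpace V (μ + P.wt l.sum) := by
  induction l with
  | nil => simpa [wt_zero, chainsS] using h
  | cons c l ih =>
    have h1 : P.chainsS W (c :: l) ≤ P.weightSpace V (μ + P.wt l.sum + P.wt c) :=
      P.bspan_weight ih
    have h2 : μ + P.wt l.sum + P.wt c = μ + P.wt (c :: l).sum := by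
      rw [List.sum_cons, P.wt_add]; abel
    rwa [h2] at h1

end GradedLie
namespace GradedLie

variable {k : Type*} [Field k] {n : ℕ} {g : Type*} [LieRing g] [LieAlgebra k g]
variable (P : GradedLie k n g)
variable {V : Type*} [AddCommGroup V] [Module k V] [LieRingModule g V] [LieModule k g V]

/-- Non-empty chains on `v` whose total degree lies in `A` vanish, provided
`g_δ v = 0` for `δ ∈ A` and the complement of `A` is closed under addition. -/
lemma chains_bot {v : V} (A : Set (Fin n → ℤ))
    (hAS : ∀ δ ∈ A, ∀ x ∈ P.gr δ, ⁅x, v⁆ = 0)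
    (hAc : ∀ δ δ' : Fin n → ℤ, δ ∉ A → δ' ∉ A → δ + δ' ∉ A) :
    ∀ (L : ℕ) (l : List (Fin n → ℤ)), l.length = L → l ≠ [] → l.sum ∈ A →
      P.chainsS (Submodule.span k {v}) l = ⊥ := by
  intro L
  induction L using Nat.strong_induction_on with
  | _ L IH =>
  have inner : ∀ (l₁ l₀ : List (Fin n → ℤ)) (c : Fin n → ℤ), c ∈ A →
      (l₀ ++ c :: l₁).length = L → (l₀ ++ c :: l₁).sum ∈ A →
      P.chainsS (Submodule.span k {v}) (l₀ ++ c :: l₁) = ⊥ := by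
    intro l₁
    induction l₁ with
    | nil =>
      intro l₀ c hc _ _
      rw [P.chainsS_append]
      have h1 : P.chainsS (Submodule.span k {v}) [c] = ⊥ := by
        show P.bspan c (Submodule.span k {v}) = ⊥
        rw [eq_bot_iff]
        apply Submodule.span_le.2
        rintro z ⟨x, hx, w, hw, rfl⟩
        obtain ⟨t, rfl⟩ := Submodule.mem_span_singleton.1 hw
        rw [lie_smul, hAS c hc x hx, smul_zero]
        exact Submodule.zero_mem ⊥
      rw [h1, P.chainsS_bot]
    | cons b l₂ ihin =>
      intro l₀ c hc hL hsum
      set W := Submodule.span k {v} with hW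
      have e1 : P.chainsS W (l₀ ++ c :: b :: l₂)
          = P.chainsS (P.bspan c (P.bspan b (P.chainsS W l₂))) l₀ := by
        rw [P.chainsS_append]; rfl
      have e2 : P.chainsS W (l₀ ++ b :: c :: l₂)
          = P.chainsS (P.bspan b (P.bspan c (P.chainsS W l₂))) l₀ := by
        rw [P.chainsS_append]; rfl
      have e3 : P.chainsS W (l₀ ++ (c + b) :: l₂)
          = P.chainsS (P.bspan (c + b) (P.chainsS W l₂)) l₀ := by
        rw [P.chainsS_append]; rfl
      have key : P.chainsS W (l₀ ++ c :: b :: l₂) ≤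
          P.chainsS W (l₀ ++ b :: c :: l₂) ⊔ P.chainsS W (l₀ ++ (c + b) :: l₂) := by
        rw [e1, e2, e3]
        calc P.chainsS (P.bspan c (P.bspan b (P.chainsS W l₂))) l₀
            ≤ P.chainsS (P.bspan b (P.bspan c (P.chainsS W l₂))
                ⊔ P.bspan (c + b) (P.chainsS W l₂)) l₀ :=
              P.chainsS_mono P.bspan_swap l₀
        _ ≤ _ := P.chainsS_sup_le _ _ l₀
      have hz1 : P.chainsS W (l₀ ++ b :: c :: l₂) = ⊥ := by
        have hre : l₀ ++ b :: c :: l₂ = (l₀ ++ [b]) ++ c :: l₂ := by simp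
        rw [hre]
        apply ihin (l₀ ++ [b]) c hc
        · rw [← hre]; simpa using hL
        · rw [← hre]
          have : (l₀ ++ b :: c :: l₂).sum = (l₀ ++ c :: b :: l₂).sum := by
            simp only [List.sum_append, List.sum_cons]; abel
          rw [this]; exact hsum
      have hz2 : P.chainsS W (l₀ ++ (c + b) :: l₂) = ⊥ := by
        have hlen : (l₀ ++ (c + b) :: l₂).length = L - 1 := by
          simp only [List.length_append, List.length_cons] at hL ⊢; omega
        have hlt : L - 1 < L := by
          simp only [List.length_append, List.length_cons] at hL; omega
        apply IH (L - 1) hlt _ hlen (by simp)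
        have : (l₀ ++ (c + b) :: l₂).sum = (l₀ ++ c :: b :: l₂).sum := by
          simp only [List.sum_append, List.sum_cons]; abel
        rw [this]; exact hsum
      rw [eq_bot_iff]
      calc P.chainsS W (l₀ ++ c :: b :: l₂) ≤ _ ⊔ _ := key
      _ ≤ ⊥ := by rw [hz1, hz2]; simp
  intro l hlen hne hsum
  have hex : ∃ c ∈ l, c ∈ A := by
    by_contra hno
    push_neg at hno
    have hall : ∀ (m : List (Fin n → ℤ)), m ≠ [] → (∀ c ∈ m, c ∉ A) → m.sum ∉ A := by
      intro m
      induction m with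
      | nil => intro h; exact absurd rfl h
      | cons c m ihm =>
        intro _ hm
        rcases eq_or_ne m [] with rfl | hm0
        · simpa using hm c (by simp)
        · have h1 : c ∉ A := hm c (by simp)
          have h2 : m.sum ∉ A := ihm hm0 (fun d hd => hm d (by simp [hd]))
          rw [List.sum_cons]; exact hAc _ _ h1 h2
    exact hall l hne hno hsum
  obtain ⟨c, hcl, hcA⟩ := hex
  obtain ⟨l₀, l₁, rfl⟩ := List.append_of_mem hcl
  exact inner l₁ l₀ c hcA hlen hsum

/-- Weight vectors of pairwise distinct nonzero shifted weights are independent of `v`. -/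
lemma weight_indep {lam : Module.Dual k ↥(P.gr 0)} {v : V}
    (hv : v ∈ P.weightSpace V lam) :
    ∀ (m : ℕ) (F : Finset (List (Fin n → ℤ))) (σ : List (Fin n → ℤ) → (Fin n → ℤ))
      (w : List (Fin n → ℤ) → V), F.card = m →
      (∀ i ∈ F, P.wt (σ i) ≠ 0) →
      (∀ i ∈ F, w i ∈ P.weightSpace V (lam + P.wt (σ i))) →
      v = ∑ i ∈ F, w i → v = 0 := by
  intro m
  induction m using Nat.strong_induction_on with
  | _ m IH =>
  intro F σ w hcard hσ hw hsum
  rcases F.eq_empty_or_nonempty with rfl | ⟨i₀, hi₀⟩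
  · simpa using hsum
  · obtain ⟨h₀, hh₀⟩ : ∃ h₀ : ↥(P.gr 0), P.wt (σ i₀) h₀ ≠ 0 := by
      by_contra hall
      push_neg at hall
      exact hσ i₀ hi₀ (LinearMap.ext fun h => hall h)
    have e0 : (0 : V) = ∑ i ∈ F, (P.wt (σ i) h₀) • w i := by
      have e2 : ⁅(h₀ : g), v⁆ = ∑ i ∈ F, (lam h₀ • w i + (P.wt (σ i) h₀) • w i) := by
        rw [hsum, lie_finset_sum]
        refine Finset.sum_congr rfl fun i hi => ?_
        rw [hw i hi h₀, LinearMap.add_apply, add_smul]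
      rw [Finset.sum_add_distrib, ← Finset.smul_sum, ← hsum, ← hv h₀] at e2
      exact (left_eq_add.mp e2).symm
    set c := P.wt (σ i₀) h₀ with hc
    have e4 : v = ∑ i ∈ F.erase i₀, (c⁻¹ * (c - P.wt (σ i) h₀)) • w i := by
      have e3 : c • v = ∑ i ∈ F, (c - P.wt (σ i) h₀) • w i := by
        calc c • v = c • (∑ i ∈ F, w i) - 0 := by rw [hsum, sub_zero]
        _ = ∑ i ∈ F, c • w i - ∑ i ∈ F, (P.wt (σ i) h₀) • w i := by
            rw [Finset.smul_sum, ← e0]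
        _ = ∑ i ∈ F, (c • w i - (P.wt (σ i) h₀) • w i) := (Finset.sum_sub_distrib _ _).symm
        _ = ∑ i ∈ F, (c - P.wt (σ i) h₀) • w i :=
            Finset.sum_congr rfl fun i _ => (sub_smul _ _ _).symm
      have e3' : c • v = ∑ i ∈ F.erase i₀, (c - P.wt (σ i) h₀) • w i := by
        rw [← Finset.add_sum_erase _ _ hi₀] at e3
        simpa [← hc] using e3
      calc v = c⁻¹ • (c • v) := by rw [smul_smul, inv_mul_cancel₀ hh₀, one_smul]
      _ = ∑ i ∈ F.erase i₀, (c⁻¹ * (c - P.wt (σ i) h₀)) • w i := by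
          rw [e3', Finset.smul_sum]
          exact Finset.sum_congr rfl fun i _ => (smul_smul _ _ _)
    exact IH (F.erase i₀).card (by rw [← hcard]; exact Finset.card_erase_lt_of_mem hi₀)
      (F.erase i₀) σ _ rfl (fun i hi => hσ i (Finset.mem_of_mem_erase hi))
      (fun i hi => Submodule.smul_mem _ _ (hw i (Finset.mem_of_mem_erase hi)))
      e4

end GradedLie
namespace GradedLie

variable {k : Type*} [Field k] {n : ℕ} {g : Type*} [LieRing g] [LieAlgebra k g]
variable (P : GradedLie k n g)
variable {V : Type*} [AddCommGroup V] [Module k V] [LieRingModule g V] [LieModule k g V]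

/-- Inductive propagation: `g_{mβ+γ} v = 0` unless `mβ+γ` is a multiple `jβ`, `j ≥ 2`. -/
lemma pprime {v : V} (N : ℕ)
    (hQ : ∀ γ : Fin n → ℤ, (∀ i, (N : ℤ) < γ i) → ∀ x ∈ P.gr γ, ⁅x, v⁆ = 0)
    {β : Fin n → ℤ} (hβ : ∀ x ∈ P.gr β, ⁅x, v⁆ = 0) :
    ∀ (m : ℕ) (γ : Fin n → ℤ), (∀ i, (N : ℤ) < γ i) →
      (∀ x ∈ P.gr ((m : ℤ) • β + γ), ⁅x, v⁆ = 0) ∨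
        (∃ j : ℤ, 2 ≤ j ∧ (m : ℤ) • β + γ = j • β) := by
  intro m
  induction m with
  | zero =>
    intro γ hγ
    left
    intro x hx
    have h0 : ((0 : ℕ) : ℤ) • β + γ = γ := by push_cast; rw [zero_smul, zero_add]
    rw [h0] at hx
    exact hQ γ hγ x hx
  | succ m ih =>
    intro γ hγ
    have hidx : ((m + 1 : ℕ) : ℤ) • β + γ = β + ((m : ℤ) • β + γ) := by
      push_cast
      rw [add_smul, one_smul]
      abel
    rcases ih γ hγ with h | ⟨j, hj, he⟩
    · by_cases hbe : (m : ℤ) • β + γ = β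
      · right
        refine ⟨2, le_refl 2, ?_⟩
        rw [hidx, hbe, two_smul]
      · left
        intro x hx
        rw [hidx] at hx
        exact P.ann_add (fun hh => hbe hh.symm) hβ h x hx
    · right
      refine ⟨j + 1, by omega, ?_⟩
      rw [hidx, he, add_smul, one_smul]; abel

/-- When `β` is strictly negative, every `δ` that is not a multiple `jβ` (`j ≥ 2`)
annihilates `v`. -/
lemma ann_complement {v : V} (N : ℕ)
    (hQ : ∀ γ : Fin n → ℤ, (∀ i, (N : ℤ) < γ i) → ∀ x ∈ P.gr γ, ⁅x, v⁆ = 0)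
    {β : Fin n → ℤ} (hβ : ∀ x ∈ P.gr β, ⁅x, v⁆ = 0) (hβneg : ∀ i, β i ≤ -1) :
    ∀ δ : Fin n → ℤ, (¬ ∃ j : ℤ, 2 ≤ j ∧ δ = j • β) → ∀ x ∈ P.gr δ, ⁅x, v⁆ = 0 := by
  intro δ hδ
  set m : ℕ := N + 1 + ∑ i, (δ i).natAbs with hm
  set γ : Fin n → ℤ := δ - (m : ℤ) • β with hγdef
  have hγQ : ∀ i, (N : ℤ) < γ i := by
    intro i
    have h1 : (δ i).natAbs ≤ ∑ i', (δ i').natAbs :=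
      Finset.single_le_sum (f := fun i' => (δ i').natAbs) (fun _ _ => Nat.zero_le _) (Finset.mem_univ i)
    have h2 : (1 : ℤ) ≤ -β i := by linarith [hβneg i]
    have h3 : (m : ℤ) * 1 ≤ (m : ℤ) * (-β i) :=
      mul_le_mul_of_nonneg_left h2 (by positivity)
    have h4 : ((δ i).natAbs : ℤ) ≤ (∑ i', (δ i').natAbs : ℕ) := by exact_mod_cast h1
    have h5 : -δ i ≤ ((δ i).natAbs : ℤ) := by
      rcases Int.natAbs_eq (δ i) with h | h <;> omega
    have h6 : (m : ℤ) = (N : ℤ) + 1 + ((∑ i', (δ i').natAbs : ℕ) : ℤ) := by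
      rw [hm]; push_cast; ring
    have hγi : γ i = δ i + (m : ℤ) * (-β i) := by
      simp [hγdef, Pi.sub_apply, Pi.smul_apply, smul_eq_mul]; ring
    rw [hγi]
    have : (N : ℤ) + 1 ≤ δ i + (m : ℤ) := by omega
    linarith
  have hmγ : (m : ℤ) • β + γ = δ := by
    rw [hγdef]; abel
  rcases P.pprime N hQ hβ m γ hγQ with h | h
  · rw [hmγ] at h; exact h
  · rw [hmγ] at h; exact absurd h hδ

/-- The hard case: `β` strictly negative.  Using simplicity, multiples `jβ` also
annihilate `v`. -/
lemma hard {v : V} {lam : Module.Dual k ↥(P.gr 0)}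
    (hv : v ∈ P.weightSpace V lam) (hv0 : v ≠ 0)
    (hsimple : IsSimpleOrder (LieSubmodule k g V))
    {β : Fin n → ℤ} (hβneg : ∀ i, β i ≤ -1) (hn : 0 < n)
    (hA : ∀ δ : Fin n → ℤ, (¬ ∃ j : ℤ, 2 ≤ j ∧ δ = j • β) → ∀ x ∈ P.gr δ, ⁅x, v⁆ = 0) :
    ∀ j : ℤ, 2 ≤ j → ∀ x ∈ P.gr (j • β), ⁅x, v⁆ = 0 := by
  intro j hj x hx
  by_contra hu0
  set u := ⁅x, v⁆ with hu
  set W0 : Submodule k V := Submodule.span k {u} with hW0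
  set Su : Submodule k V := ⨆ l : List (Fin n → ℤ), P.chainsS W0 l with hSu
  have hom : ∀ (c : Fin n → ℤ) (y : g), y ∈ P.gr c → ∀ w ∈ Su, ⁅y, w⁆ ∈ Su := by
    intro c y hy w hw
    refine Submodule.iSup_induction (motive := fun w => ⁅y, w⁆ ∈ Su) _ hw
      (fun l w hwl => ?_) (by simp) (fun a b ha hb => by change ⁅y, a + b⁆ ∈ Su; rw [lie_add]; exact add_mem ha hb)
    have : ⁅y, w⁆ ∈ P.chainsS W0 (c :: l) := P.lie_mem_bspan hy hwl
    exact le_iSup (fun l => P.chainsS W0 l) (c :: l) this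
  have hstab : ∀ (y : g) (w : V), w ∈ Su → ⁅y, w⁆ ∈ Su := by
    intro y w hw
    have hy : y ∈ (⊤ : Submodule k g) := trivial
    rw [← P.isInternal.submodule_iSup_eq_top] at hy
    refine Submodule.iSup_induction (motive := fun y => ⁅y, w⁆ ∈ Su) _ hy
      (fun c z hz => hom c z hz w hw) (by change ⁅(0:g), w⁆ ∈ Su; rw [zero_lie]; exact Su.zero_mem)
      (fun a b ha hb => by change ⁅a + b, w⁆ ∈ Su; rw [add_lie]; exact add_mem ha hb)
  set SuL : LieSubmodule k g V :=
    { toSubmodule := Su, lie_mem := fun {y w} hw => hstab y w hw } with hSuL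
  have huSu : u ∈ Su :=
    le_iSup (fun l => P.chainsS W0 l) ([] : List (Fin n → ℤ))
      (Submodule.mem_span_singleton_self u)
  have htop : SuL = ⊤ := by
    rcases hsimple.eq_bot_or_eq_top SuL with h | h
    · exfalso
      apply hu0
      have : u ∈ SuL := huSu
      rw [h] at this
      simpa using this
    · exact h
  have hvSu : v ∈ Su := by
    have : v ∈ SuL := by rw [htop]; exact LieSubmodule.mem_top v
    exact this
  obtain ⟨f, hf, hfs⟩ := (Submodule.mem_iSup_iff_exists_finsupp _ _).1 hvSu
  set A : Set (Fin n → ℤ) := {δ | ¬ ∃ j' : ℤ, 2 ≤ j' ∧ δ = j' • β} with hAdef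
  have hAc : ∀ δ δ' : Fin n → ℤ, δ ∉ A → δ' ∉ A → δ + δ' ∉ A := by
    intro δ δ' h1 h2
    simp only [hAdef, Set.mem_setOf_eq, not_not] at h1 h2 ⊢
    obtain ⟨a, ha, rfl⟩ := h1
    obtain ⟨b, hb, rfl⟩ := h2
    exact ⟨a + b, by omega, by rw [add_smul]⟩
  have hbot : ∀ l : List (Fin n → ℤ), (l.sum + j • β) ∈ A → P.chainsS W0 l = ⊥ := by
    intro l hl
    have h1 : W0 ≤ P.chainsS (Submodule.span k {v}) [j • β] := by
      rw [hW0, Submodule.span_le, Set.singleton_subset_iff]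
      exact P.lie_mem_bspan hx (Submodule.mem_span_singleton_self v)
    have h2 : P.chainsS W0 l ≤ P.chainsS (Submodule.span k {v}) (l ++ [j • β]) := by
      rw [P.chainsS_append]
      exact P.chainsS_mono h1 l
    have h3 : P.chainsS (Submodule.span k {v}) (l ++ [j • β]) = ⊥ := by
      refine P.chains_bot A (fun δ hδ => hA δ hδ) hAc (l ++ [j • β]).length _ rfl
        (by simp) ?_
      simpa [List.sum_append] using hl
    exact le_bot_iff.1 (h2.trans (le_of_eq h3))
  have hwu : W0 ≤ P.weightSpace V (lam + P.wt (j • β)) := by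
    rw [hW0, Submodule.span_le, Set.singleton_subset_iff]
    exact P.lie_mem_weightSpace hx hv
  have hwl : ∀ l : List (Fin n → ℤ),
      P.chainsS W0 l ≤ P.weightSpace V (lam + P.wt (l.sum + j • β)) := by
    intro l
    have h1 := P.chainsS_weight hwu l
    have h2 : lam + P.wt (j • β) + P.wt l.sum = lam + P.wt (l.sum + j • β) := by
      rw [P.wt_add]; abel
    rwa [h2] at h1
  refine hv0 (P.weight_indep hv f.support.card f.support (fun l => l.sum + j • β) f rfl
    ?_ ?_ ?_)
  · intro l hl
    have hfl : f l ≠ 0 := Finsupp.mem_support_iff.1 hl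
    by_cases hin : (l.sum + j • β) ∈ A
    · exfalso
      apply hfl
      have := hf l
      rw [hbot l hin] at this
      simpa using this
    · simp only [hAdef, Set.mem_setOf_eq, not_not] at hin
      obtain ⟨j', hj', he⟩ := hin
      show P.wt (l.sum + j • β) ≠ 0
      rw [he]
      intro h0
      have h1 : j' • β = 0 := P.wt_injective (by rw [h0, P.wt_zero])
      have h2 := congrFun h1 ⟨0, hn⟩
      have h3 := hβneg ⟨0, hn⟩
      simp only [Pi.smul_apply, smul_eq_mul, Pi.zero_apply] at h2
      rcases mul_eq_zero.1 h2 with h | h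
      · omega
      · omega
  · intro l hl
    exact hwl l (hf l)
  · rw [← hfs]
    rfl

end GradedLie
namespace GradedLie

variable {k : Type*} [Field k] {n : ℕ} {g : Type*} [LieRing g] [LieAlgebra k g]
variable (P : GradedLie k n g)
variable {V : Type*} [AddCommGroup V] [Module k V] [LieRingModule g V] [LieModule k g V]

/-- The annihilation property for the weight vector `v` itself. -/
lemma v_main {v : V} {lam : Module.Dual k ↥(P.gr 0)}
    (hv : v ∈ P.weightSpace V lam) (hv0 : v ≠ 0)
    (hsimple : IsSimpleOrder (LieSubmodule k g V)) (hn : 0 < n)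
    (N : ℕ)
    (hQ : ∀ γ : Fin n → ℤ, (∀ i, (N : ℤ) < γ i) → ∀ x ∈ P.gr γ, ⁅x, v⁆ = 0)
    {β : Fin n → ℤ} (hβ : ∀ x ∈ P.gr β, ⁅x, v⁆ = 0) :
    ∀ (b : ℕ) (γ : Fin n → ℤ), (∀ i, (N : ℤ) < γ i) →
      ∀ x ∈ P.gr ((b : ℤ) • β + γ), ⁅x, v⁆ = 0 := by
  intro b γ hγ
  rcases P.pprime N hQ hβ b γ hγ with h | ⟨j, hj, he⟩
  · exact h
  · rw [he]
    have hγe : ∀ i, γ i = (j - (b : ℤ)) * β i := by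
      intro i
      have h1 := congrFun he i
      simp only [Pi.add_apply, Pi.smul_apply, smul_eq_mul] at h1
      linear_combination h1
    set d : ℤ := j - (b : ℤ) with hd
    have hdN : ∀ i, (N : ℤ) < d * β i := by
      intro i
      have := hγ i
      rwa [hγe i] at this
    set i₀ : Fin n := ⟨0, hn⟩ with hi₀
    rcases lt_trichotomy d 0 with hdneg | hd0 | hdpos
    · have hβneg : ∀ i, β i ≤ -1 := by
        intro i
        by_contra hcon
        push_neg at hcon
        have h1 : 0 ≤ β i := by omega
        have h2 : d * β i ≤ 0 := mul_nonpos_of_nonpos_of_nonneg (le_of_lt hdneg) h1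
        have h3 := hdN i
        have h4 : (0 : ℤ) ≤ (N : ℤ) := Int.natCast_nonneg N
        omega
      exact P.hard hv hv0 hsimple hβneg hn
        (P.ann_complement N hQ hβ hβneg) j hj
    · exfalso
      have := hdN i₀
      rw [hd0, zero_mul] at this
      have : (0 : ℤ) ≤ (N : ℤ) := Int.natCast_nonneg N
      omega
    · have hβpos : ∀ i, 1 ≤ β i := by
        intro i
        by_contra hcon
        push_neg at hcon
        have h1 : β i ≤ 0 := by omega
        have h2 : d * β i ≤ 0 := mul_nonpos_of_nonneg_of_nonpos (le_of_lt hdpos) h1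
        have h3 := hdN i
        have h4 : (0 : ℤ) ≤ (N : ℤ) := Int.natCast_nonneg N
        omega
      apply hQ
      intro i
      have h1 : d * β i ≤ j * β i := by
        have hb0 : (0 : ℤ) ≤ (b : ℤ) * β i :=
          mul_nonneg (Int.natCast_nonneg b) (by linarith [hβpos i])
        have hje : j * β i = d * β i + (b : ℤ) * β i := by rw [hd]; ring
        linarith
      have h2 := hdN i
      simp only [Pi.smul_apply, smul_eq_mul]
      omega

end GradedLie
/-- Let `V` be a simple weight module in which every element
is a generalized highest weight element (w.r.t. the standard basis).  If a
nonzero weight vector `v` satisfies `g_β v = 0` for some `β` with `a·β < 0`,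
then for every `w ∈ V` there is `N` with `g_{bβ+γ} w = 0` for all `b ∈ ℕ` and
all `γ` with `γ_i > N` for all `i`. -/
theorem graded_annihilation_propagates
    (k : Type*) [Field k] [IsAlgClosed k] [CharZero k] (n : ℕ) (hn : 0 < n)
    (g : Type*) [LieRing g] [LieAlgebra k g] (P : GradedLie k n g)
    (V : Type*) [AddCommGroup V] [Module k V] [LieRingModule g V] [LieModule k g V]
    (hsimple : IsSimpleOrder (LieSubmodule k g V))
    (hwt : P.IsWeightModule V)
    (hghw : ∀ v : V, P.IsGHWstd V v)
    (lam : Module.Dual k ↥(P.gr 0))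
    (v : V) (hv : v ∈ P.weightSpace V lam) (hv0 : v ≠ 0)
    (a : Fin n → ℝ) (β : Fin n → ℤ) (hβ : rdot a β < 0)
    (hann : ∀ x ∈ P.gr β, ⁅x, v⁆ = 0) :
    ∀ w : V, ∃ N : ℕ, ∀ (b : ℕ) (γ : Fin n → ℤ), (∀ i, (N : ℤ) < γ i) →
      ∀ x ∈ P.gr ((b : ℤ) • β + γ), ⁅x, w⁆ = 0 := by
  classical
  obtain ⟨Nv, hNv⟩ := hghw v
  have hvmain := P.v_main hv hv0 hsimple hn Nv hNv hann
  set Mset : Set V := {w | ∃ N : ℕ, ∀ (b : ℕ) (γ : Fin n → ℤ), (∀ i, (N : ℤ) < γ i) →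
      ∀ x ∈ P.gr ((b : ℤ) • β + γ), ⁅x, w⁆ = 0} with hMdef
  have hadd : ∀ w₁ w₂ : V, w₁ ∈ Mset → w₂ ∈ Mset → w₁ + w₂ ∈ Mset := by
    rintro w₁ w₂ ⟨N₁, h₁⟩ ⟨N₂, h₂⟩
    refine ⟨max N₁ N₂, fun b γ hγ x hx => ?_⟩
    rw [lie_add,
      h₁ b γ (fun i => lt_of_le_of_lt (by exact_mod_cast le_max_left N₁ N₂) (hγ i)) x hx,
      h₂ b γ (fun i => lt_of_le_of_lt (by exact_mod_cast le_max_right N₁ N₂) (hγ i)) x hx,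
      add_zero]
  set Msub : Submodule k V :=
    { carrier := Mset
      add_mem' := fun h1 h2 => hadd _ _ h1 h2
      zero_mem' := ⟨0, fun _ _ _ x _ => lie_zero x⟩
      smul_mem' := by
        rintro t w ⟨N, hN⟩
        exact ⟨N, fun b γ hγ x hx => by rw [lie_smul, hN b γ hγ x hx, smul_zero]⟩ }
    with hMsub
  have hom : ∀ (c : Fin n → ℤ) (y : g), y ∈ P.gr c → ∀ w ∈ Mset, ⁅y, w⁆ ∈ Mset := by
    rintro c y hyc w ⟨N, hN⟩
    refine ⟨N + ∑ i, (c i).natAbs, fun b γ hγ z hz => ?_⟩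
    have hsum : ∀ i, (c i).natAbs ≤ ∑ i', (c i').natAbs := fun i =>
      Finset.single_le_sum (f := fun i' => (c i').natAbs) (fun _ _ => Nat.zero_le _)
        (Finset.mem_univ i)
    have hcast : ((N + ∑ i', (c i').natAbs : ℕ) : ℤ)
        = (N : ℤ) + ((∑ i', (c i').natAbs : ℕ) : ℤ) := by push_cast; ring
    have hγ1 : ∀ i, (N : ℤ) < γ i + c i := by
      intro i
      have h1 := hγ i
      rw [hcast] at h1
      have h4 : ((c i).natAbs : ℤ) ≤ ((∑ i', (c i').natAbs : ℕ) : ℤ) := by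
        exact_mod_cast hsum i
      have h5 : -(c i) ≤ ((c i).natAbs : ℤ) := by
        rcases Int.natAbs_eq (c i) with h | h <;> omega
      omega
    have hγ0 : ∀ i, (N : ℤ) < γ i := by
      intro i
      have h1 := hγ i
      rw [hcast] at h1
      have : (0 : ℤ) ≤ ((∑ i', (c i').natAbs : ℕ) : ℤ) := Int.natCast_nonneg _
      omega
    rw [leibniz_lie]
    have hzx : ⁅z, y⁆ ∈ P.gr ((b : ℤ) • β + (γ + c)) := by
      have h1 := P.bracket_le _ _ z hz y hyc
      have h2 : (b : ℤ) • β + γ + c = (b : ℤ) • β + (γ + c) := by rw [add_assoc]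
      rwa [h2] at h1
    rw [hN b (γ + c) (fun i => by simpa using hγ1 i) _ hzx, hN b γ hγ0 z hz, lie_zero,
      add_zero]
  have hTall : ∀ y : g, ∀ w ∈ Mset, ⁅y, w⁆ ∈ Mset := by
    have hy' : ∀ y : g, y ∈ (⊤ : Submodule k g) := fun y => trivial
    intro y
    have hy := hy' y
    rw [← P.isInternal.submodule_iSup_eq_top] at hy
    refine Submodule.iSup_induction (motive := fun y => ∀ w ∈ Mset, ⁅y, w⁆ ∈ Mset) _ hy
      (fun c z hz => hom c z hz) (fun w hw => by rw [zero_lie]; exact Msub.zero_mem)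
      (fun y₁ y₂ h1 h2 w hw => ?_)
    have := hadd _ _ (h1 w hw) (h2 w hw)
    rwa [← add_lie] at this
  set MLie : LieSubmodule k g V :=
    { toSubmodule := Msub, lie_mem := fun {y w} hw => hTall y w hw } with hMLie
  have hvM : v ∈ Mset := ⟨Nv, hvmain⟩
  have htop : MLie = ⊤ := by
    rcases hsimple.eq_bot_or_eq_top MLie with h | h
    · exfalso
      apply hv0
      have hvm : v ∈ MLie := hvM
      rw [h] at hvm
      simpa using hvm
    · exact h
  intro w
  have hwM : w ∈ MLie := by rw [htop]; exact LieSubmodule.mem_top w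
  exact hwM
end
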